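/- arXiv:1412.5652 — 6 statements merged into one kernel-verified Lean document; each statement's English description precedes it below -/
import Mathlib

section
/- Let M be a topological space and suppose d is finite-valued (d a b < ⊤ for all a, b ∈ M) and satisfies the push-up property: for every s ∈ M, every w in the topological closure of I⁺({s}), and every z ∈ M with w ≪ z, one has d w z ≤ d s z. Then for every finite subset S ⊆ M and every future divergent sequence (x_i) there exists N ∈ ℕ such that x_j ∉ closure(I⁺(S)) for all j ≥ N. -/
open Filter Topology

/-- abstract form of Lemma 3.4.
Assume `M` is a topological space, `d` is finite-valued and satisfies the
push-up property: for all `s`, all `w ∈ closure (I⁺({s}))` and all `z` with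
`w ≪ z`, `d w z ≤ d s z`. Then for every finite `S ⊆ M` and every future
divergent sequence `(x_i)` there is `N` with `x_j ∉ closure (I⁺(S))` for all
`j ≥ N`. -/
theorem stmt_3 {M : Type*} [TopologicalSpace M] (d : M → M → ENNReal)
    (hfin : ∀ a b : M, d a b < ⊤)
    (hpush : ∀ s w z : M, w ∈ closure {p : M | 0 < d s p} → 0 < d w z → d w z ≤ d s z)
    (S : Set M) (hSfin : S.Finite) (x : ℕ → M)
    (hx : ∃ p : M, Tendsto (fun i => d (x i) p) atTop (𝓝 ⊤)) :
    ∃ N : ℕ, ∀ j ≥ N, x j ∉ closure {y : M | ∃ s ∈ S, 0 < d s y} := by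
  obtain ⟨p, hp⟩ := hx
  set B : ENNReal := hSfin.toFinset.sup (fun s => d s p) with hB
  have hBlt : B < ⊤ := by
    rw [hB]
    exact Finset.sup_lt_iff (by simp) |>.2 (fun s _ => hfin s p)
  have hev : ∀ᶠ i in atTop, B < d (x i) p := hp.eventually (eventually_gt_nhds hBlt)
  obtain ⟨N, hN⟩ := hev.exists_forall_of_atTop
  refine ⟨N, fun j hj hmem => ?_⟩
  have hset : {y : M | ∃ s ∈ S, 0 < d s y} = ⋃ s ∈ S, {y : M | 0 < d s y} := by
    ext y; simp
  rw [hset, hSfin.closure_biUnion] at hmem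
  simp only [Set.mem_iUnion] at hmem
  obtain ⟨s, hs, hcl⟩ := hmem
  have hpos : 0 < d (x j) p := lt_of_le_of_lt (zero_le : (0 : ENNReal) ≤ B) (hN j hj)
  have hle : d (x j) p ≤ d s p := hpush s (x j) p hcl hpos
  have hBs : d s p ≤ B := Finset.le_sup (f := fun s => d s p) (hSfin.mem_toFinset.2 hs)
  exact absurd (hN j hj) (not_lt.2 (hle.trans hBs))
end

section
/- Suppose d satisfies the reverse triangle inequality. Let S ⊆ M and let (x_i) be a future divergent sequence with F_{(x_i)} ∩ S ≠ ∅. Then there exists N ∈ ℕ such that x_j ∈ I⁻(S) for all j ≥ N. -/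
open Filter Topology

/-- abstract form of Lemma 3.5.
If `d` satisfies the reverse triangle inequality, `(x_i)` is future divergent
and `F_{(x_i)} ∩ S ≠ ∅`, then there is `N` with `x_j ∈ I⁻(S)` for all `j ≥ N`. -/
theorem stmt_4 {M : Type*} (d : M → M → ENNReal)
    (hrev : ∀ x y z : M, 0 < d x y → 0 < d y z → d x y + d y z ≤ d x z)
    (S : Set M) (x : ℕ → M)
    (hx : ∃ p : M, Tendsto (fun i => d (x i) p) atTop (𝓝 ⊤))
    (hint : ({y : M | ∃ s ∈ {p : M | Tendsto (fun i => d (x i) p) atTop (𝓝 ⊤)},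
        0 < d s y} ∩ S).Nonempty) :
    ∃ N : ℕ, ∀ j ≥ N, x j ∈ {y : M | ∃ s ∈ S, 0 < d y s} := by
  obtain ⟨y, ⟨s, hs, hsy⟩, hyS⟩ := hint
  have hev : ∀ᶠ i in atTop, 1 < d (x i) s :=
    hs.eventually (eventually_gt_nhds (by simp : (1 : ENNReal) < ⊤))
  obtain ⟨N, hN⟩ := hev.exists_forall_of_atTop
  refine ⟨N, fun j hj => ?_⟩
  have hpos : 0 < d (x j) s := lt_trans one_pos (hN j hj)
  exact ⟨y, hyS, lt_of_lt_of_le (lt_of_lt_of_le hsy le_add_self) (hrev _ _ _ hpos hsy)⟩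
end

section
/- Assume d is finite-valued (d a b < ⊤ for all a, b ∈ M). Let S ⊆ M be achronal and suppose there is a hatting H with H ⊆ S. Then for every x ∈ M, d(S,x) < ⊤ and d(x,S) < ⊤. -/
open Filter Topology

/-- abstract finiteness content of Lemma 3.12.
Assume `d` is finite-valued, `S` is achronal and there is a hatting `H ⊆ S`
(`H` achronal, every future divergent sequence is eventually in `I⁻(H)`,
every past divergent sequence is eventually in `I⁺(H)`). Then for every
`x ∈ M`, `d(S,x) < ⊤` and `d(x,S) < ⊤`. -/
theorem stmt_5 {M : Type*} (d : M → M → ENNReal)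
    (hfin : ∀ a b : M, d a b < ⊤)
    (S : Set M) (hSach : ∀ s ∈ S, ∀ s' ∈ S, ¬ 0 < d s s')
    (H : Set M) (hHS : H ⊆ S)
    (hHach : ∀ s ∈ H, ∀ s' ∈ H, ¬ 0 < d s s')
    (hHfut : ∀ x : ℕ → M, (∃ p : M, Tendsto (fun i => d (x i) p) atTop (𝓝 ⊤)) →
      ∃ N : ℕ, ∀ j ≥ N, x j ∈ {y : M | ∃ s ∈ H, 0 < d y s})
    (hHpast : ∀ x : ℕ → M, (∃ p : M, Tendsto (fun i => d p (x i)) atTop (𝓝 ⊤)) →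
      ∃ N : ℕ, ∀ j ≥ N, x j ∈ {y : M | ∃ s ∈ H, 0 < d s y}) :
    ∀ x : M, (⨆ s ∈ S, d s x) < ⊤ ∧ (⨆ s ∈ S, d x s) < ⊤ := by
  intro x
  constructor
  · by_contra h
    push_neg at h
    have hseq : ∀ n : ℕ, ∃ s ∈ S, (n : ENNReal) < d s x := by
      intro n
      by_contra hc
      push_neg at hc
      have hle : (⨆ s ∈ S, d s x) ≤ (n : ENNReal) := iSup₂_le hc
      exact absurd (le_trans h hle) (by simp)
    choose f hf1 hf2 using hseq
    have htend : Tendsto (fun i => d (f i) x) atTop (𝓝 ⊤) := by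
      refine ENNReal.tendsto_nhds_top fun n => eventually_atTop.2 ⟨n, fun i hi => ?_⟩
      exact lt_of_le_of_lt (by exact_mod_cast hi) (hf2 i)
    obtain ⟨N, hN⟩ := hHfut f ⟨x, htend⟩
    obtain ⟨s, hs, hpos⟩ := hN N le_rfl
    exact hSach (f N) (hf1 N) s (hHS hs) hpos
  · by_contra h
    push_neg at h
    have hseq : ∀ n : ℕ, ∃ s ∈ S, (n : ENNReal) < d x s := by
      intro n
      by_contra hc
      push_neg at hc
      have hle : (⨆ s ∈ S, d x s) ≤ (n : ENNReal) := iSup₂_le hc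
      exact absurd (le_trans h hle) (by simp)
    choose f hf1 hf2 using hseq
    have htend : Tendsto (fun i => d x (f i)) atTop (𝓝 ⊤) := by
      refine ENNReal.tendsto_nhds_top fun n => eventually_atTop.2 ⟨n, fun i hi => ?_⟩
      exact lt_of_le_of_lt (by exact_mod_cast hi) (hf2 i)
    obtain ⟨N, hN⟩ := hHpast f ⟨x, htend⟩
    obtain ⟨s, hs, hpos⟩ := hN N le_rfl
    exact hSach s (hHS hs) (f N) (hf1 N) hpos
end

section
/- Let f : M → ℝ satisfy the flip condition. Let r ∈ ℝ, set H = f⁻¹({r}), and assume M = I⁺(H) ∪ H ∪ I⁻(H). Then H is a hatting: H is achronal, every future divergent sequence eventually lies in I⁻(H) (there is N with x_j ∈ I⁻(H) for all j ≥ N), and every past divergent sequence eventually lies in I⁺(H). -/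
open Filter Topology

/-- abstract form of Proposition 4.2.
If `f` satisfies the flip condition and `H = f⁻¹({r})` satisfies
`M = I⁺(H) ∪ H ∪ I⁻(H)`, then `H` is a hatting: `H` is achronal, every
future divergent sequence is eventually in `I⁻(H)`, and every past
divergent sequence is eventually in `I⁺(H)`. -/
theorem stmt_7 {M : Type*} (d : M → M → ENNReal) (f : M → ℝ)
    (hflip : ∀ x y : M, 0 < d x y → d x y ≤ ENNReal.ofReal (f y - f x))
    (r : ℝ) (H : Set M) (hH : H = f ⁻¹' {r})
    (hcover : ∀ x : M,
      x ∈ {y : M | ∃ s ∈ H, 0 < d s y} ∨ x ∈ H ∨ x ∈ {y : M | ∃ s ∈ H, 0 < d y s}) :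
    (∀ s ∈ H, ∀ s' ∈ H, ¬ 0 < d s s') ∧
    (∀ x : ℕ → M, (∃ p : M, Tendsto (fun i => d (x i) p) atTop (𝓝 ⊤)) →
      ∃ N : ℕ, ∀ j ≥ N, x j ∈ {y : M | ∃ s ∈ H, 0 < d y s}) ∧
    (∀ x : ℕ → M, (∃ p : M, Tendsto (fun i => d p (x i)) atTop (𝓝 ⊤)) →
      ∃ N : ℕ, ∀ j ≥ N, x j ∈ {y : M | ∃ s ∈ H, 0 < d s y}) := by
  subst hH
  -- membership in I⁺/I⁻ forces f-value strictly above/below r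
  have hup : ∀ x : M, (∃ s ∈ f ⁻¹' {r}, 0 < d s x) → r < f x := by
    rintro x ⟨s, hs, hds⟩
    have h := (hflip s x hds).trans_lt' hds
    have : 0 < f x - f s := ENNReal.ofReal_pos.mp (lt_of_lt_of_le hds (hflip s x hds))
    have hsr : f s = r := hs
    linarith
  have hdown : ∀ x : M, (∃ s ∈ f ⁻¹' {r}, 0 < d x s) → f x < r := by
    rintro x ⟨s, hs, hds⟩
    have : 0 < f s - f x := ENNReal.ofReal_pos.mp (lt_of_lt_of_le hds (hflip x s hds))
    have hsr : f s = r := hs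
    linarith
  refine ⟨?_, ?_, ?_⟩
  · intro s hs s' hs' hd
    have := hup s' ⟨s, hs, hd⟩
    have hs'r : f s' = r := hs'
    linarith
  · rintro x ⟨p, hp⟩
    have hev : ∀ᶠ j in atTop,
        ENNReal.ofReal (f p - r) < d (x j) p :=
      hp.eventually (lt_mem_nhds (by simp [lt_top_iff_ne_top]))
    rcases hev.exists_forall_of_atTop with ⟨N, hN⟩
    refine ⟨N, fun j hj => ?_⟩
    have hgt := hN j hj
    have hdpos : 0 < d (x j) p := lt_of_le_of_lt zero_le hgt
    have hle := hflip (x j) p hdpos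
    have hlt : ENNReal.ofReal (f p - r) < ENNReal.ofReal (f p - f (x j)) :=
      lt_of_lt_of_le hgt hle
    have h1 : 0 < f p - f (x j) := ENNReal.ofReal_pos.mp (lt_of_le_of_lt zero_le hlt)
    have h2 : f p - r < f p - f (x j) :=
      (ENNReal.ofReal_lt_ofReal_iff h1).mp hlt
    have hfx : f (x j) < r := by linarith
    rcases hcover (x j) with h | h | h
    · exact absurd (hup _ h) (by linarith)
    · exact absurd (show f (x j) = r from h) (by linarith)
    · exact h
  · rintro x ⟨p, hp⟩
    have hev : ∀ᶠ j in atTop,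
        ENNReal.ofReal (r - f p) < d p (x j) :=
      hp.eventually (lt_mem_nhds (by simp [lt_top_iff_ne_top]))
    rcases hev.exists_forall_of_atTop with ⟨N, hN⟩
    refine ⟨N, fun j hj => ?_⟩
    have hgt := hN j hj
    have hdpos : 0 < d p (x j) := lt_of_le_of_lt zero_le hgt
    have hle := hflip p (x j) hdpos
    have hlt : ENNReal.ofReal (r - f p) < ENNReal.ofReal (f (x j) - f p) :=
      lt_of_lt_of_le hgt hle
    have h1 : 0 < f (x j) - f p := ENNReal.ofReal_pos.mp (lt_of_le_of_lt zero_le hlt)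
    have h2 : r - f p < f (x j) - f p :=
      (ENNReal.ofReal_lt_ofReal_iff h1).mp hlt
    have hfx : r < f (x j) := by linarith
    rcases hcover (x j) with h | h | h
    · exact h
    · exact absurd (show f (x j) = r from h) (by linarith)
    · exact absurd (hdown _ h) (by linarith)
end

section
/- Let M be a topological space, R : M → M → Prop a relation, and f : M → ℝ a function such that f(a) ≤ f(b) whenever R a b. Let x ∈ M and let γ : ℝ → M satisfy γ(0) = x. Assume that f ∘ γ is continuous at 0 and that for every t ∈ (0,1] the set {y ∈ M : R (γ(−t)) y and R y (γ(t))} is a neighbourhood of x. Then f is continuous at x. -/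
open Filter Topology

/-- abstract form of Proposition A.1.
If `f` is monotone for the relation `R`, `γ` is a curve through `x = γ 0`
such that `f ∘ γ` is continuous at `0`, and for every `t ∈ (0,1]` the set
`{y | R (γ (-t)) y ∧ R y (γ t)}` is a neighbourhood of `x`, then `f` is
continuous at `x`. -/
theorem stmt_8 {M : Type*} [TopologicalSpace M] (R : M → M → Prop) (f : M → ℝ)
    (hmono : ∀ a b : M, R a b → f a ≤ f b)
    (x : M) (γ : ℝ → M) (hγ0 : γ 0 = x)
    (hcont : ContinuousAt (f ∘ γ) 0)
    (hnbhd : ∀ t ∈ Set.Ioc (0 : ℝ) 1, {y : M | R (γ (-t)) y ∧ R y (γ t)} ∈ 𝓝 x) :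
    ContinuousAt f x := by
  rw [ContinuousAt, Metric.tendsto_nhds]
  intro ε hε
  rw [ContinuousAt, Metric.tendsto_nhds] at hcont
  obtain ⟨δ, hδ, hδ'⟩ := Metric.eventually_nhds_iff.mp (hcont ε hε)
  set t : ℝ := min (δ / 2) 1 with ht
  have ht0 : 0 < t := lt_min (by linarith) one_pos
  have ht1 : t ∈ Set.Ioc (0 : ℝ) 1 := ⟨ht0, min_le_right _ _⟩
  have htδ : t < δ := lt_of_le_of_lt (min_le_left _ _) (by linarith)
  have h1 : dist ((f ∘ γ) t) ((f ∘ γ) 0) < ε := hδ' (by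
    simp [Real.dist_eq, abs_of_pos ht0, htδ])
  have h2 : dist ((f ∘ γ) (-t)) ((f ∘ γ) 0) < ε := hδ' (by
    simp [Real.dist_eq, abs_of_pos ht0, htδ])
  filter_upwards [hnbhd t ht1] with y hy
  have hl := hmono _ _ hy.1
  have hr := hmono _ _ hy.2
  simp only [Function.comp, hγ0, Real.dist_eq] at h1 h2 ⊢
  rw [abs_lt] at h1 h2 ⊢
  constructor <;> linarith
end

section
/- Let p ∈ V satisfy η(p,z) ≥ √(−η(z,z)) for every future-directed timelike vector z ∈ V (i.e. for every z with η(z,z) < 0 and z₀ > 0). Then p₀ ≤ −1 and η(p,p) ≤ −1; that is, p is a past-directed timelike vector with −η(p,p) ≥ 1. -/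
/-- The Minkowski bilinear form on `ℝ × EuclideanSpace ℝ (Fin n)`:
`η((a,u),(b,v)) = -a*b + ⟪u,v⟫`. -/
noncomputable def minkowski {n : ℕ} (p q : ℝ × EuclideanSpace ℝ (Fin n)) : ℝ :=
  -(p.1 * q.1) + inner ℝ p.2 q.2

/-- pointwise content of the forward direction of
Proposition 2.14. If `η(p,z) ≥ √(-η(z,z))` for every future-directed
timelike `z`, then `p₀ ≤ -1` and `η(p,p) ≤ -1`, i.e. `p` is past-directed
timelike with `-η(p,p) ≥ 1`. -/
theorem stmt_10 {n : ℕ} (hn : 1 ≤ n) (p : ℝ × EuclideanSpace ℝ (Fin n))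
    (hp : ∀ z : ℝ × EuclideanSpace ℝ (Fin n), minkowski z z < 0 → 0 < z.1 →
      Real.sqrt (-minkowski z z) ≤ minkowski p z) :
    p.1 ≤ -1 ∧ minkowski p p ≤ -1 := by
  set m : ℝ := ‖p.2‖ with hm
  have hm0 : 0 ≤ m := norm_nonneg _
  set s : ℝ := Real.sqrt (m ^ 2 + 1) with hsdef
  have hs2 : s ^ 2 = m ^ 2 + 1 := Real.sq_sqrt (by positivity)
  have hs0 : 0 < s := Real.sqrt_pos.mpr (by positivity)
  have hs1 : 1 ≤ s := by
    nlinarith [sq_nonneg m, sq_nonneg (s - 1)]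
  set z : ℝ × EuclideanSpace ℝ (Fin n) := (1, (-s⁻¹) • p.2) with hz
  have hinner : (inner ℝ p.2 z.2 : ℝ) = -s⁻¹ * m ^ 2 := by
    rw [show z.2 = (-s⁻¹) • p.2 from rfl, real_inner_smul_right,
      real_inner_self_eq_norm_sq, ← hm]
  have hinner2 : (inner ℝ z.2 z.2 : ℝ) = s⁻¹ ^ 2 * m ^ 2 := by
    rw [show z.2 = (-s⁻¹) • p.2 from rfl, real_inner_smul_right,
      real_inner_smul_left, real_inner_self_eq_norm_sq, ← hm]
    ring
  have hzz : minkowski z z = -(s⁻¹ ^ 2) := by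
    have : s⁻¹ ^ 2 * (m ^ 2 + 1) = 1 := by
      rw [← hs2]
      field_simp
    simp only [minkowski, hz, hinner2]
    nlinarith
  have hzt : minkowski z z < 0 := by
    have h1 : (0:ℝ) < s⁻¹ := by positivity
    rw [hzz]; nlinarith
  have hsq : Real.sqrt (-minkowski z z) = s⁻¹ := by
    rw [hzz, neg_neg, Real.sqrt_sq (by positivity)]
  have key := hp z hzt (by simp [hz])
  rw [hsq] at key
  have hpz : minkowski p z = -p.1 - s⁻¹ * m ^ 2 := by
    simp only [minkowski, hinner, hz]
    rw [show inner ℝ p.2 (-s⁻¹ • p.2) = -s⁻¹ * m ^ 2 from hinner]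
    ring
  rw [hpz] at key
  -- multiply by s : 1 ≤ -p.1*s - m², so p.1 ≤ -s
  have hkey2 : p.1 * s ≤ -(s ^ 2) := by
    have h1 : s * s⁻¹ = 1 := mul_inv_cancel₀ (ne_of_gt hs0)
    nlinarith
  have hps : p.1 ≤ -s := by
    nlinarith
  constructor
  · linarith
  · have : minkowski p p = -(p.1 * p.1) + m ^ 2 := by
      rw [minkowski, real_inner_self_eq_norm_sq, ← hm]
    rw [this]
    nlinarith
end
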